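/- In the variant of 3-bit PMRAC, for every shared two-qubit density matrix ρ, every family of 2×2 unitary matrices (U_x)_{x∈{0,1}³}, and every triple of dichotomic observables B₁, B₂, B₃ on ℂ⁴, the average success probability satisfies S_Q ≤ 1/2 + 1/√6. -/

import Mathlib

open Matrix
open scoped Kronecker ComplexOrder

noncomputable section

lemma aux_trace_psd_nonneg {n : Type*} [Fintype n] [DecidableEq n] {M : Matrix n n ℂ}
    (hM : M.PosSemidef) : 0 ≤ M.trace := by
  rw [Matrix.trace]
  refine Finset.sum_nonneg fun i _ => ?_
  exact hM.diag_nonneg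

lemma aux_trace_mul_psd_nonneg {n : Type*} [Fintype n] [DecidableEq n]
    {A B : Matrix n n ℂ} (hA : A.PosSemidef) (hB : B.PosSemidef) :
    0 ≤ (A * B).trace := by
  obtain ⟨C, rfl⟩ : ∃ C : Matrix n n ℂ, B = Cᴴ * C := by
    open scoped MatrixOrder in
    obtain ⟨X, hX, -, hXX⟩ := CFC.exists_sqrt_of_isSelfAdjoint_of_quasispectrumRestricts
      hB.isHermitian (QuasispectrumRestricts.nnreal_of_nonneg hB.nonneg)
    exact ⟨X, by rw [← hXX]; exact congrArg (· * X) hX.star_eq.symm⟩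
  rw [← Matrix.mul_assoc, Matrix.trace_mul_cycle]
  exact aux_trace_psd_nonneg (hA.mul_mul_conjTranspose_same C)

lemma aux_int_coeff : ∀ x x' : Fin 3 → Fin 2,
    (∑ y : Fin 3, (-1:ℤ)^((x y).val + (x' y).val))
      + (-1:ℤ)^((∑ y : Fin 3, (x y).val) + (∑ y : Fin 3, (x' y).val))
      + (if x' = (fun y => 1 - x y) then 4 else 0)
      = (if x' = x then 4 else 0) := by decide

lemma aux_coeff_c (x x' : Fin 3 → Fin 2) :
    (∑ y : Fin 3, (-1:ℂ)^((x y).val + (x' y).val))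
      + (-1:ℂ)^((∑ y : Fin 3, (x y).val) + (∑ y : Fin 3, (x' y).val))
      + (if x' = (fun y => 1 - x y) then 4 else 0)
      = (if x' = x then 4 else 0) := by
  have h := congrArg (fun z : ℤ => (z : ℂ)) (aux_int_coeff x x')
  push_cast at h
  simpa [apply_ite (fun z : ℤ => (z : ℂ))] using h

lemma aux_bound
    (P : (Fin 3 → Fin 2) → Matrix (Fin 2 × Fin 2) (Fin 2 × Fin 2) ℂ)
    (hPpsd : ∀ x, (P x).PosSemidef)
    (hPtr : ∀ x, (P x).trace = 1)
    (hPsq : ∀ x, (P x * P x).trace ≤ 1)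
    (B : Fin 3 → Matrix (Fin 2 × Fin 2) (Fin 2 × Fin 2) ℂ)
    (hB : ∀ y, (B y).IsHermitian)
    (hB2 : ∀ y, B y * B y = 1) :
    (24:ℂ)⁻¹ * ∑ y : Fin 3, ∑ x : Fin 3 → Fin 2,
      ((P x) * ((2:ℂ)⁻¹ • (1 + ((-1:ℂ)^(x y).val) • B y))).trace
      ≤ ((1/2 + 1/Real.sqrt 6 : ℝ) : ℂ) := by
  classical
  have hRnn : ∀ r : ℝ, 0 ≤ r → (0:ℂ) ≤ (r:ℂ) := by
    intro r hr; exact_mod_cast hr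
  have hPherm : ∀ x, (P x)ᴴ = P x := fun x => (hPpsd x).1
  set G : Fin 3 → Matrix (Fin 2 × Fin 2) (Fin 2 × Fin 2) ℂ :=
    fun y => ∑ x : Fin 3 → Fin 2, ((-1:ℂ)^(x y).val) • P x with hGdef
  set G4 : Matrix (Fin 2 × Fin 2) (Fin 2 × Fin 2) ℂ :=
    ∑ x : Fin 3 → Fin 2, ((-1:ℂ)^(∑ y, (x y).val)) • P x with hG4def
  set Dval : ℂ := ∑ y : Fin 3, (G y * B y).trace with hDdef
  -- expansion of product of two signed sums
  have hexp : ∀ a b : (Fin 3 → Fin 2) → ℂ,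
      ((∑ x : Fin 3 → Fin 2, a x • P x) * (∑ x : Fin 3 → Fin 2, b x • P x)).trace
        = ∑ x : Fin 3 → Fin 2, ∑ x' : Fin 3 → Fin 2, (a x * b x') * (P x * P x').trace := by
    intro a b
    rw [Finset.sum_mul_sum, Matrix.trace_sum]
    refine Finset.sum_congr rfl fun x _ => ?_
    rw [Matrix.trace_sum]
    refine Finset.sum_congr rfl fun x' _ => ?_
    rw [smul_mul_assoc, mul_smul_comm, smul_smul, Matrix.trace_smul, smul_eq_mul]
  -- key identity
  have hID : (∑ y : Fin 3, (G y * G y).trace) + (G4 * G4).trace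
      + (∑ x : Fin 3 → Fin 2, ∑ x' : Fin 3 → Fin 2,
          (if x' = (fun y => 1 - x y) then (4:ℂ) else 0) * (P x * P x').trace)
      = ∑ x : Fin 3 → Fin 2, ∑ x' : Fin 3 → Fin 2,
          (if x' = x then (4:ℂ) else 0) * (P x * P x').trace := by
    have h1 : ∑ y : Fin 3, (G y * G y).trace
        = ∑ x : Fin 3 → Fin 2, ∑ x' : Fin 3 → Fin 2,
            (∑ y : Fin 3, (-1:ℂ)^((x y).val + (x' y).val)) * (P x * P x').trace := by
      have e1 : ∀ y : Fin 3, (G y * G y).trace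
          = ∑ x : Fin 3 → Fin 2, ∑ x' : Fin 3 → Fin 2,
              ((-1:ℂ)^((x y).val + (x' y).val)) * (P x * P x').trace := by
        intro y
        rw [hGdef, hexp]
        exact Finset.sum_congr rfl fun x _ => Finset.sum_congr rfl fun x' _ => by
          rw [pow_add]
      rw [Finset.sum_congr rfl fun y _ => e1 y, Finset.sum_comm]
      refine Finset.sum_congr rfl fun x _ => ?_
      rw [Finset.sum_comm]
      refine Finset.sum_congr rfl fun x' _ => ?_
      rw [Finset.sum_mul]
    have h4 : (G4 * G4).trace
        = ∑ x : Fin 3 → Fin 2, ∑ x' : Fin 3 → Fin 2,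
            ((-1:ℂ)^((∑ y, (x y).val) + (∑ y, (x' y).val))) * (P x * P x').trace := by
      rw [hG4def, hexp]
      exact Finset.sum_congr rfl fun x _ => Finset.sum_congr rfl fun x' _ => by
        rw [pow_add]
    rw [h1, h4, ← Finset.sum_add_distrib, ← Finset.sum_add_distrib]
    refine Finset.sum_congr rfl fun x _ => ?_
    rw [← Finset.sum_add_distrib, ← Finset.sum_add_distrib]
    refine Finset.sum_congr rfl fun x' _ => ?_
    rw [← add_mul, ← add_mul, aux_coeff_c x x']
  have hcross : ∀ x x' : Fin 3 → Fin 2, 0 ≤ (P x * P x').trace :=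
    fun x x' => aux_trace_mul_psd_nonneg (hPpsd x) (hPpsd x')
  have hkey : ∑ y : Fin 3, (G y * G y).trace ≤ 32 := by
    have hG4herm : G4ᴴ = G4 := by
      rw [hG4def, Matrix.conjTranspose_sum]
      exact Finset.sum_congr rfl fun x _ => by
        rw [Matrix.conjTranspose_smul, hPherm x]
        congr 1
        simp
    have h4nn : 0 ≤ (G4 * G4).trace := by
      have : G4 * G4 = G4 * G4ᴴ := by rw [hG4herm]
      rw [this]
      exact aux_trace_psd_nonneg (Matrix.posSemidef_self_mul_conjTranspose G4)
    have hdiagsum : ∑ x : Fin 3 → Fin 2, ∑ x' : Fin 3 → Fin 2,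
        (if x' = x then (4:ℂ) else 0) * (P x * P x').trace ≤ 32 := by
      have : ∀ x : Fin 3 → Fin 2, ∑ x' : Fin 3 → Fin 2,
          (if x' = x then (4:ℂ) else 0) * (P x * P x').trace = 4 * (P x * P x).trace := by
        intro x
        rw [Finset.sum_eq_single x]
        · simp
        · intro b _ hb; simp [hb]
        · intro h; exact absurd (Finset.mem_univ x) h
      rw [Finset.sum_congr rfl fun x _ => this x]
      calc ∑ x : Fin 3 → Fin 2, 4 * (P x * P x).trace
          ≤ ∑ x : Fin 3 → Fin 2, 4 * 1 := by
            refine Finset.sum_le_sum fun x _ => ?_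
            refine mul_le_mul_of_nonneg_left (hPsq x) ?_
            exact_mod_cast hRnn 4 (by norm_num)
        _ = 32 := by simp; norm_num
    have hoff : 0 ≤ ∑ x : Fin 3 → Fin 2, ∑ x' : Fin 3 → Fin 2,
        (if x' = (fun y => 1 - x y) then (4:ℂ) else 0) * (P x * P x').trace := by
      refine Finset.sum_nonneg fun x _ => Finset.sum_nonneg fun x' _ => ?_
      by_cases h : x' = (fun y => 1 - x y)
      · simp only [h, if_pos rfl]
        exact mul_nonneg (by exact_mod_cast hRnn 4 (by norm_num)) (hcross x _)
      · simp [h]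
    calc ∑ y : Fin 3, (G y * G y).trace
        ≤ (∑ y : Fin 3, (G y * G y).trace) + ((G4 * G4).trace
            + ∑ x : Fin 3 → Fin 2, ∑ x' : Fin 3 → Fin 2,
              (if x' = (fun y => 1 - x y) then (4:ℂ) else 0) * (P x * P x').trace) :=
          le_add_of_nonneg_right (add_nonneg h4nn hoff)
      _ = ∑ x : Fin 3 → Fin 2, ∑ x' : Fin 3 → Fin 2,
            (if x' = x then (4:ℂ) else 0) * (P x * P x').trace := by
          rw [← add_assoc]; exact hID
      _ ≤ 32 := hdiagsum
  set c : ℂ := ((Real.sqrt 6 : ℝ) : ℂ) with hcdef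
  have hcc : c * c = 6 := by
    rw [hcdef, ← Complex.ofReal_mul, Real.mul_self_sqrt (by norm_num : (0:ℝ) ≤ 6)]
    norm_num
  have hc0 : 0 ≤ c := hRnn _ (Real.sqrt_nonneg 6)
  have hcne : c ≠ 0 := by
    intro h; rw [h] at hcc; simp at hcc
  set z : ℂ := c / 4 with hzdef
  have hzstar : star z = z := by
    rw [hzdef, hcdef]
    simp [Complex.star_def, ← Complex.ofReal_div, Complex.conj_ofReal]
  have hGherm : ∀ y, (G y)ᴴ = G y := by
    intro y
    rw [hGdef, Matrix.conjTranspose_sum]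
    exact Finset.sum_congr rfl fun x _ => by
      rw [Matrix.conjTranspose_smul, hPherm x]
      congr 1
      simp
  have hAMGM : ∀ y : Fin 3,
      z * (G y * B y).trace + z * (G y * B y).trace
        ≤ (z * z) * (G y * G y).trace + 4 := by
    intro y
    have hM := Matrix.posSemidef_self_mul_conjTranspose (z • G y - B y)
    have h0 := aux_trace_psd_nonneg hM
    have hexp2 : (z • G y - B y) * (z • G y - B y)ᴴ
        = (z * z) • (G y * G y) - z • (G y * B y) - z • (B y * G y) + B y * B y := by
      rw [Matrix.conjTranspose_sub, Matrix.conjTranspose_smul, hzstar, hGherm y, (hB y).eq]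
      simp only [Matrix.sub_mul, Matrix.mul_sub, smul_mul_assoc, mul_smul_comm, smul_smul,
        smul_sub]
      abel
    have htr : ((z • G y - B y) * (z • G y - B y)ᴴ).trace
        = (z * z) * (G y * G y).trace - z * (G y * B y).trace
            - z * (B y * G y).trace + 4 := by
      rw [hexp2]
      rw [Matrix.trace_add, Matrix.trace_sub, Matrix.trace_sub, Matrix.trace_smul,
        Matrix.trace_smul, Matrix.trace_smul, hB2 y, Matrix.trace_one]
      simp [smul_eq_mul]
    rw [htr, Matrix.trace_mul_comm (B y) (G y)] at h0
    have hre : (z * z) * (G y * G y).trace + 4 - (z * (G y * B y).trace + z * (G y * B y).trace)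
        = (z * z) * (G y * G y).trace - z * (G y * B y).trace - z * (G y * B y).trace + 4 := by
      ring
    exact sub_nonneg.mp (by rw [hre]; exact h0)
  -- sum over y
  have hzz32 : (z * z) * 32 + 12 = 24 := by
    have h1 : (z * z) * 32 = 2 * (c * c) := by rw [hzdef]; ring
    rw [h1, hcc]; norm_num
  have hDle : z * Dval + z * Dval ≤ 24 := by
    have hs := Finset.sum_le_sum (fun y (_ : y ∈ Finset.univ) => hAMGM y)
    have hl : ∑ y : Fin 3, (z * (G y * B y).trace + z * (G y * B y).trace)
        = z * Dval + z * Dval := by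
      rw [hDdef, Finset.mul_sum, ← Finset.sum_add_distrib]
    have hr : ∑ y : Fin 3, ((z * z) * (G y * G y).trace + 4)
        = (z * z) * (∑ y : Fin 3, (G y * G y).trace) + 12 := by
      rw [Finset.sum_add_distrib, ← Finset.mul_sum]
      norm_num
    rw [hl, hr] at hs
    refine hs.trans ?_
    rw [← hzz32]
    have : (z * z) * (∑ y : Fin 3, (G y * G y).trace) ≤ (z * z) * 32 := by
      refine mul_le_mul_of_nonneg_left hkey ?_
      rw [hzdef]
      rw [hcdef]
      have : ((Real.sqrt 6 : ℝ) : ℂ) / 4 * (((Real.sqrt 6 : ℝ) : ℂ) / 4)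
          = (((Real.sqrt 6 / 4) * (Real.sqrt 6 / 4) : ℝ) : ℂ) := by push_cast; ring
      rw [this]
      exact hRnn _ (by positivity)
    exact add_le_add_left this 12
  have hD8c : Dval ≤ 8 * c := by
    have h2 : (2 / c) * (z * Dval + z * Dval) ≤ (2 / c) * 24 := by
      refine mul_le_mul_of_nonneg_left hDle ?_
      have : (2:ℂ) / c = ((2 / Real.sqrt 6 : ℝ) : ℂ) := by
        rw [hcdef]; push_cast; ring
      rw [this]
      exact hRnn _ (by positivity)
    have hlhs : (2 / c) * (z * Dval + z * Dval) = Dval := by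
      rw [hzdef]; field_simp; ring
    have hrhs : (2 / c) * 24 = 8 * c := by
      rw [div_mul_eq_mul_div, div_eq_iff hcne, mul_assoc, hcc]
      norm_num
    rw [hlhs, hrhs] at h2
    exact h2
  have hGB : ∀ y : Fin 3, (G y * B y).trace
      = ∑ x : Fin 3 → Fin 2, ((-1:ℂ)^(x y).val) * (P x * B y).trace := by
    intro y
    rw [hGdef]
    rw [Finset.sum_mul, Matrix.trace_sum]
    exact Finset.sum_congr rfl fun x _ => by
      rw [smul_mul_assoc, Matrix.trace_smul, smul_eq_mul]
  have hterm : ∀ (y : Fin 3) (x : Fin 3 → Fin 2),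
      ((P x) * ((2:ℂ)⁻¹ • (1 + ((-1:ℂ)^(x y).val) • B y))).trace
        = 2⁻¹ + 2⁻¹ * (((-1:ℂ)^(x y).val) * (P x * B y).trace) := by
    intro y x
    rw [mul_smul_comm, Matrix.trace_smul, Matrix.mul_add, Matrix.mul_one, Matrix.trace_add,
      hPtr x, mul_smul_comm, Matrix.trace_smul]
    simp only [smul_eq_mul]
    ring
  have hfinal_eq : (24:ℂ)⁻¹ * (∑ y : Fin 3, ∑ x : Fin 3 → Fin 2,
      ((P x) * ((2:ℂ)⁻¹ • (1 + ((-1:ℂ)^(x y).val) • B y))).trace)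
      = 2⁻¹ + 48⁻¹ * Dval := by
    rw [Finset.sum_congr rfl fun y _ => Finset.sum_congr rfl fun x _ => hterm y x]
    have hy : ∀ y : Fin 3, ∑ x : Fin 3 → Fin 2,
        ((2:ℂ)⁻¹ + 2⁻¹ * (((-1:ℂ)^(x y).val) * (P x * B y).trace))
        = 4 + 2⁻¹ * (G y * B y).trace := by
      intro y
      rw [Finset.sum_add_distrib, ← Finset.mul_sum, ← hGB y, Finset.sum_const,
        Finset.card_univ]
      congr 1
      rw [nsmul_eq_mul]
      have : (Fintype.card (Fin 3 → Fin 2) : ℂ) = 8 := by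
        simp [Fintype.card_fun]
      rw [this]
      norm_num
    rw [Finset.sum_congr rfl fun y _ => hy y, Finset.sum_add_distrib, ← Finset.mul_sum,
      ← hDdef, Finset.sum_const, Finset.card_univ]
    have : (Fintype.card (Fin 3) : ℕ) = 3 := by simp
    rw [this, nsmul_eq_mul]
    ring
  have h6 : c / 6 = 1 / c := by
    rw [div_eq_div_iff (by norm_num : (6:ℂ) ≠ 0) hcne, hcc]
    ring
  calc (24:ℂ)⁻¹ * (∑ y : Fin 3, ∑ x : Fin 3 → Fin 2,
      ((P x) * ((2:ℂ)⁻¹ • (1 + ((-1:ℂ)^(x y).val) • B y))).trace)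
      = 2⁻¹ + 48⁻¹ * Dval := hfinal_eq
    _ ≤ 2⁻¹ + 48⁻¹ * (8 * c) := by
        refine add_le_add_right ?_ _
        refine mul_le_mul_of_nonneg_left hD8c ?_
        have : ((48⁻¹ : ℝ) : ℂ) = (48:ℂ)⁻¹ := by push_cast; ring
        rw [← this]
        exact hRnn _ (by norm_num)
    _ = ((1/2 + 1/Real.sqrt 6 : ℝ) : ℂ) := by
        push_cast
        rw [← hcdef]
        have h48 : (48:ℂ)⁻¹ * (8 * c) = c / 6 := by ring
        rw [h48, h6]
        norm_num

lemma aux_trace_sq_le_one {n : Type*} [Fintype n] [DecidableEq n] {M : Matrix n n ℂ}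
    (hM : M.PosSemidef) (h1 : M.trace = 1) : (M * M).trace ≤ 1 := by
  have hH := hM.isHermitian
  set V : Matrix n n ℂ := (hH.eigenvectorUnitary : Matrix n n ℂ) with hV
  have hVU : V * star V = 1 := (Matrix.mem_unitaryGroup_iff).mp hH.eigenvectorUnitary.2
  have hUV : star V * V = 1 := (Matrix.mem_unitaryGroup_iff').mp hH.eigenvectorUnitary.2
  have hspec := hH.spectral_theorem
  rw [Unitary.conjStarAlgAut_apply] at hspec
  set D : Matrix n n ℂ := Matrix.diagonal (RCLike.ofReal ∘ hH.eigenvalues) with hD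
  -- trace M = sum of eigenvalues
  have htr : M.trace = ∑ i, (hH.eigenvalues i : ℂ) := by
    conv_lhs => rw [hspec]
    rw [← hV, Matrix.trace_mul_cycle, hUV, Matrix.one_mul]
    simp [hD, Matrix.trace_diagonal]
  have htr2 : (M * M).trace = ∑ i, ((hH.eigenvalues i : ℂ))^2 := by
    have : M * M = V * (D * D) * star V := by
      conv_lhs => rw [hspec]
      rw [← hV]
      calc V * D * star V * (V * D * star V) = V * (D * ((star V * V) * (D * star V))) := by
            simp only [Matrix.mul_assoc]
          _ = V * (D * D) * star V := by
            rw [hUV, Matrix.one_mul, Matrix.mul_assoc, Matrix.mul_assoc]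
    rw [this, Matrix.trace_mul_cycle, hUV, Matrix.one_mul]
    simp [hD, Matrix.diagonal_mul_diagonal, Matrix.trace_diagonal, sq]
  -- real part
  have hreal : ∑ i, hH.eigenvalues i = 1 := by
    have := htr.symm.trans h1
    exact_mod_cast this
  have hnn : ∀ i, 0 ≤ hH.eigenvalues i := hM.eigenvalues_nonneg
  have hsum : ∑ i, (hH.eigenvalues i)^2 ≤ 1 := by
    calc ∑ i, (hH.eigenvalues i)^2 ≤ ∑ i, (hH.eigenvalues i) * 1 := by
          refine Finset.sum_le_sum fun i _ => ?_
          rw [sq]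
          refine mul_le_mul_of_nonneg_left ?_ (hnn i)
          rw [← hreal]
          exact Finset.single_le_sum (fun j _ => hnn j) (Finset.mem_univ i)
        _ = 1 := by simp [hreal]
  rw [htr2]
  calc (∑ i, ((hH.eigenvalues i : ℂ))^2) = ((∑ i, (hH.eigenvalues i)^2 : ℝ) : ℂ) := by
        push_cast; ring
      _ ≤ ((1:ℝ) : ℂ) := by exact_mod_cast hsum
      _ = 1 := by norm_num

lemma aux_kron_conjT {l m p q : Type*} (A : Matrix l m ℂ) (B : Matrix p q ℂ) :
    (A ⊗ₖ B)ᴴ = Aᴴ ⊗ₖ Bᴴ := by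
  ext ⟨i, j⟩ ⟨k, l'⟩
  simp [Matrix.conjTranspose_apply, Matrix.kroneckerMap_apply, star_mul']


/-- In the variant of 3-bit PMRAC, for every shared two-qubit density matrix ρ,
every family of 2×2 unitaries `U x` (x ∈ {0,1}³), and every triple of dichotomic
observables `B y` on ℂ⁴, the average success probability satisfies
`S_Q ≤ 1/2 + 1/√6`. -/
theorem optimal_bound_3bit_PMRAC
    (ρ : Matrix (Fin 2 × Fin 2) (Fin 2 × Fin 2) ℂ)
    (hρ : ρ.PosSemidef) (hρtr : ρ.trace = 1)
    (U : (Fin 3 → Fin 2) → Matrix (Fin 2) (Fin 2) ℂ)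
    (hU : ∀ x, U x ∈ Matrix.unitaryGroup (Fin 2) ℂ)
    (B : Fin 3 → Matrix (Fin 2 × Fin 2) (Fin 2 × Fin 2) ℂ)
    (hB : ∀ y, (B y).IsHermitian)
    (hB2 : ∀ y, B y * B y = 1) :
    ((24 : ℂ))⁻¹ * ∑ y : Fin 3, ∑ x : Fin 3 → Fin 2,
      (((U x ⊗ₖ (1 : Matrix (Fin 2) (Fin 2) ℂ)) * ρ *
          (U x ⊗ₖ (1 : Matrix (Fin 2) (Fin 2) ℂ))ᴴ) *
        ((2 : ℂ)⁻¹ • (1 + ((-1 : ℂ) ^ (x y).val) • B y))).trace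
      ≤ ((1 / 2 + 1 / Real.sqrt 6 : ℝ) : ℂ) := by
  classical
  have hAu : ∀ x, (U x ⊗ₖ (1 : Matrix (Fin 2) (Fin 2) ℂ))ᴴ
      * (U x ⊗ₖ (1 : Matrix (Fin 2) (Fin 2) ℂ)) = 1 := by
    intro x
    rw [aux_kron_conjT, ← Matrix.mul_kronecker_mul]
    have h1 : (U x)ᴴ * U x = 1 := by
      have := (hU x).1
      simpa [Matrix.star_eq_conjTranspose] using this
    rw [h1, Matrix.conjTranspose_one, Matrix.one_mul, Matrix.one_kronecker_one]
  set A : (Fin 3 → Fin 2) → Matrix (Fin 2 × Fin 2) (Fin 2 × Fin 2) ℂ :=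
    fun x => U x ⊗ₖ (1 : Matrix (Fin 2) (Fin 2) ℂ) with hAdef
  have hPpsd : ∀ x, (A x * ρ * (A x)ᴴ).PosSemidef :=
    fun x => hρ.mul_mul_conjTranspose_same (A x)
  have hPtr : ∀ x, (A x * ρ * (A x)ᴴ).trace = 1 := by
    intro x
    rw [Matrix.trace_mul_cycle, hAu x, Matrix.one_mul, hρtr]
  have hPsq : ∀ x, ((A x * ρ * (A x)ᴴ) * (A x * ρ * (A x)ᴴ)).trace ≤ 1 := by
    intro x
    have hmm : (A x * ρ * (A x)ᴴ) * (A x * ρ * (A x)ᴴ) = A x * (ρ * ρ) * (A x)ᴴ := by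
      calc (A x * ρ * (A x)ᴴ) * (A x * ρ * (A x)ᴴ)
          = A x * (ρ * (((A x)ᴴ * A x) * (ρ * (A x)ᴴ))) := by
            simp only [Matrix.mul_assoc]
        _ = A x * (ρ * ρ) * (A x)ᴴ := by
            rw [hAu x, Matrix.one_mul]
            simp only [Matrix.mul_assoc]
    rw [hmm, Matrix.trace_mul_cycle, hAu x, Matrix.one_mul]
    exact aux_trace_sq_le_one hρ hρtr
  exact aux_bound (fun x => A x * ρ * (A x)ᴴ) hPpsd hPtr hPsq B hB hB2
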